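/- arXiv:math/0702895 — 2 statements merged into one kernel-verified Lean document; each statement's English description precedes it below -/
import Mathlib

section
/- Let A be an N×N real matrix such that there exists a real number λ and a vector w with all entries strictly positive satisfying Aᵀ w = λ w and λ > 0. If u is a vector with nonnegative entries such that every entry of A u is nonpositive, then u = 0. -/
open scoped Matrix


theorem stmt_0 {N : ℕ} (A : Matrix (Fin N) (Fin N) ℝ)
    (w : Fin N → ℝ) (hw : ∀ i, w i > 0) (lam : ℝ) (hlam : lam > 0)
    (heig : A.transpose.mulVec w = lam • w)
    (u : Fin N → ℝ) (hu : ∀ i, u i ≥ 0) (hAu : ∀ i, (A.mulVec u) i ≤ 0) :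
    u = 0 := by
  have key : w ⬝ᵥ A.mulVec u = lam * (w ⬝ᵥ u) := by
    rw [Matrix.dotProduct_mulVec, ← Matrix.mulVec_transpose, heig, smul_dotProduct]
    rfl
  have h1 : w ⬝ᵥ A.mulVec u ≤ 0 :=
    Finset.sum_nonpos fun i _ => mul_nonpos_of_nonneg_of_nonpos (hw i).le (hAu i)
  have h2 : (0:ℝ) ≤ w ⬝ᵥ u :=
    Finset.sum_nonneg fun i _ => mul_nonneg (hw i).le (hu i)
  have h3 : w ⬝ᵥ u = 0 := le_antisymm (nonpos_of_mul_nonpos_right (key ▸ h1) hlam |>.trans_eq rfl) h2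
  funext i
  have := (Finset.sum_eq_zero_iff_of_nonneg
    (fun j _ => mul_nonneg (hw j).le (hu j))).mp h3 i (Finset.mem_univ i)
  have := (mul_eq_zero.mp this).resolve_left (hw i).ne'
  simpa using this
end

section
/- Finite-dimensional version of Theorem 4 (diagonal cooperative part): let L = diag(L₁,...,L_N) ∈ ℝ^{N×N} be diagonal and M an N×N matrix whose off-diagonal entries are all nonnegative (M⁻ is diagonal). Suppose for each k there is λ_k ∈ ℝ and w_k > 0 with L_k + min(M k k, 0) = λ_k (scalar eigenvalue, eigenfunction w_k). If for every j, λ_j * w_j + ∑ₖ (M⁺) k j * w_k > 0, then any u ≥ 0 with (L + M) u ≤ 0 entrywise is zero. -/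
theorem stmt_4 {N : ℕ} (d : Fin N → ℝ) (M : Matrix (Fin N) (Fin N) ℝ)
    (hoff : ∀ i j, i ≠ j → M i j ≥ 0)
    (lam : Fin N → ℝ) (hlam : ∀ k, lam k = d k + min (M k k) 0)
    (w : Fin N → ℝ) (hw : ∀ k, w k > 0)
    (hpos : ∀ j, lam j * w j + ∑ k, max (M k j) 0 * w k > 0)
    (u : Fin N → ℝ) (hu : ∀ i, u i ≥ 0)
    (hAu : ∀ i, ((Matrix.diagonal d + M).mulVec u) i ≤ 0) :
    u = 0 := by
  -- coefficient identity
  have key : ∀ k, d k * w k + ∑ i, M i k * w i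
      = lam k * w k + ∑ i, max (M i k) 0 * w i := by
    intro k
    have h1 : ∑ i, (M i k - max (M i k) 0) * w i = min (M k k) 0 * w k := by
      rw [Finset.sum_eq_single k]
      · have : M k k - max (M k k) 0 = min (M k k) 0 := by
          rcases le_or_gt (M k k) 0 with h | h
          · rw [max_eq_right h, min_eq_left h]; ring
          · rw [max_eq_left h.le, min_eq_right h.le]; ring
        rw [this]
      · intro i _ hik
        have : max (M i k) 0 = M i k := max_eq_left (hoff i k hik)
        rw [this]; ring
      · intro h; exact absurd (Finset.mem_univ k) h
    have h2 : ∑ i, M i k * w i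
        = ∑ i, (M i k - max (M i k) 0) * w i + ∑ i, max (M i k) 0 * w i := by
      rw [← Finset.sum_add_distrib]; apply Finset.sum_congr rfl; intro i _; ring
    rw [h2, h1, hlam]; ring
  -- rearranged weighted sum
  have hsum : ∑ i, w i * ((Matrix.diagonal d + M).mulVec u) i
      = ∑ k, (lam k * w k + ∑ i, max (M i k) 0 * w i) * u k := by
    have expand : ∀ i, w i * ((Matrix.diagonal d + M).mulVec u) i
        = d i * w i * u i + ∑ j, M i j * w i * u j := by
      intro i
      simp only [Matrix.mulVec, dotProduct, Matrix.add_apply,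
        Matrix.diagonal_apply, Finset.mul_sum, add_mul, mul_add]
      rw [Finset.sum_add_distrib]
      congr 1
      · rw [Finset.sum_eq_single i]
        · simp; ring
        · intro j _ hji; simp [Ne.symm hji]
        · intro h; exact absurd (Finset.mem_univ i) h
      · apply Finset.sum_congr rfl; intro j _; ring
    calc ∑ i, w i * ((Matrix.diagonal d + M).mulVec u) i
        = ∑ i, (d i * w i * u i + ∑ j, M i j * w i * u j) := by
          apply Finset.sum_congr rfl; intro i _; exact expand i
      _ = ∑ i, d i * w i * u i + ∑ j, (∑ i, M i j * w i) * u j := by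
          rw [Finset.sum_add_distrib]
          congr 1
          rw [Finset.sum_comm]
          apply Finset.sum_congr rfl; intro j _
          rw [Finset.sum_mul]
      _ = ∑ k, (d k * w k + ∑ i, M i k * w i) * u k := by
          rw [← Finset.sum_add_distrib]
          apply Finset.sum_congr rfl; intro k _; ring
      _ = ∑ k, (lam k * w k + ∑ i, max (M i k) 0 * w i) * u k := by
          apply Finset.sum_congr rfl; intro k _; rw [key k]
  have hle : ∑ i, w i * ((Matrix.diagonal d + M).mulVec u) i ≤ 0 :=
    Finset.sum_nonpos fun i _ => mul_nonpos_of_nonneg_of_nonpos (hw i).le (hAu i)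
  rw [hsum] at hle
  have hterm : ∀ k ∈ Finset.univ, (0:ℝ) ≤ (lam k * w k + ∑ i, max (M i k) 0 * w i) * u k :=
    fun k _ => mul_nonneg (hpos k).le (hu k)
  have hall := (Finset.sum_eq_zero_iff_of_nonneg hterm).mp
    (le_antisymm hle (Finset.sum_nonneg hterm))
  funext k
  have := hall k (Finset.mem_univ k)
  have hc := hpos k
  have : u k = 0 := by
    rcases mul_eq_zero.mp this with h | h
    · exact absurd h (ne_of_gt hc)
    · exact h
  simpa using this
end
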